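/- In Λ_{1,7} with k = -3e_0 + e_1 + ... + e_7, an element e is called exceptional if e·e = -1 and e·k = -1. There are exactly 56 exceptional elements in Λ_{1,7}. -/

import Mathlib

set_option synthInstance.maxSize 400
set_option maxHeartbeats 2000000
set_option maxRecDepth 100000

/-- The inner product of Λ_{1,7}. -/
def lambdaForm (x y : Fin 8 → ℤ) : ℤ := 2 * x 0 * y 0 - ∑ i, x i * y i

/-- k = -3e_0 + e_1 + ... + e_7 -/
def kvec : Fin 8 → ℤ := fun i => if i = 0 then -3 else 1

abbrev Vtup := ℤ × ℤ × ℤ × ℤ × ℤ × ℤ × ℤ × ℤ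

noncomputable def bint (a : ℤ) : Finset ℤ := Finset.Icc (-((a+1)/2)) (-((a+1)/2) + 1)

def Pcond (p : Vtup) : Prop :=
  p.1*p.1 - (p.2.1*p.2.1 + p.2.2.1*p.2.2.1 + p.2.2.2.1*p.2.2.2.1 + p.2.2.2.2.1*p.2.2.2.2.1
    + p.2.2.2.2.2.1*p.2.2.2.2.2.1 + p.2.2.2.2.2.2.1*p.2.2.2.2.2.2.1
    + p.2.2.2.2.2.2.2*p.2.2.2.2.2.2.2) = -1
  ∧ 3*p.1 + (p.2.1 + p.2.2.1 + p.2.2.2.1 + p.2.2.2.2.1 + p.2.2.2.2.2.1 + p.2.2.2.2.2.2.1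
    + p.2.2.2.2.2.2.2) = 1

instance : DecidablePred Pcond := fun p => by unfold Pcond; infer_instance

noncomputable def Ta (a : ℤ) : Finset Vtup :=
  ({a} ×ˢ bint a ×ˢ bint a ×ˢ bint a ×ˢ bint a ×ˢ bint a ×ˢ bint a ×ˢ bint a).filter Pcond

lemma fst_of_mem_Ta {p : Vtup} {a : ℤ} (h : p ∈ Ta a) : p.1 = a := by
  simp only [Ta, Finset.mem_filter, Finset.mem_product, Finset.mem_singleton] at h
  exact h.1.1

lemma Ta_disj {a b : ℤ} (h : a ≠ b) : Disjoint (Ta a) (Ta b) :=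
  Finset.disjoint_left.2 fun {p} hp hq => h ((fst_of_mem_Ta hp).symm.trans (fst_of_mem_Ta hq))

noncomputable def Ttot : Finset Vtup :=
  (((Ta 0).disjUnion (Ta 1) (Ta_disj (by norm_num))).disjUnion (Ta 2)
    (by
      rw [Finset.disjUnion_eq_union, Finset.disjoint_union_left]
      exact ⟨Ta_disj (by norm_num), Ta_disj (by norm_num)⟩)).disjUnion (Ta 3)
    (by
      rw [Finset.disjUnion_eq_union, Finset.disjUnion_eq_union, Finset.disjoint_union_left,
        Finset.disjoint_union_left]
      exact ⟨⟨Ta_disj (by norm_num), Ta_disj (by norm_num)⟩, Ta_disj (by norm_num)⟩)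

def fmap (p : Vtup) : Fin 8 → ℤ :=
  ![p.1, p.2.1, p.2.2.1, p.2.2.2.1, p.2.2.2.2.1, p.2.2.2.2.2.1, p.2.2.2.2.2.2.1, p.2.2.2.2.2.2.2]

lemma fmap_inj : Function.Injective fmap := by
  rintro ⟨a,b,c,d,e,f,g,h⟩ ⟨a',b',c',d',e',f',g',h'⟩ heq
  have h0 : a = a' := congrFun heq 0
  have h1 : b = b' := congrFun heq 1
  have h2 : c = c' := congrFun heq 2
  have h3 : d = d' := congrFun heq 3
  have h4 : e = e' := congrFun heq 4
  have h5 : f = f' := congrFun heq 5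
  have h6 : g = g' := congrFun heq 6
  have h7 : h = h' := congrFun heq 7
  simp_all

lemma aBound (a : ℤ) (key : 0 ≤ 14*(3 + 3*a - a*a)) : 0 ≤ a ∧ a ≤ 3 := by
  constructor <;> nlinarith [key, sq_nonneg a, sq_nonneg (a-3)]

lemma sqb' (x n : ℤ) (hn : 0 ≤ n) (h : x^2 < (n+1)^2) : -n ≤ x ∧ x ≤ n := by
  constructor <;> nlinarith [h, hn]

lemma coordBound (a b : ℤ) (hA0 : 0 ≤ a) (hA3 : a ≤ 3)
    (hsq : (7*b - (1-3*a))^2 ≤ 14*(3 + 3*a - a*a)) :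
    -((a+1)/2) ≤ b ∧ b ≤ -((a+1)/2) + 1 := by
  interval_cases a
  · obtain ⟨l, r⟩ := sqb' (7*b-1) 6 (by norm_num) (by nlinarith [hsq]); omega
  · obtain ⟨l, r⟩ := sqb' (7*b+2) 8 (by norm_num) (by nlinarith [hsq]); omega
  · obtain ⟨l, r⟩ := sqb' (7*b+5) 8 (by norm_num) (by nlinarith [hsq]); omega
  · obtain ⟨l, r⟩ := sqb' (7*b+8) 6 (by norm_num) (by nlinarith [hsq]); omega

lemma bounds (e : Fin 8 → ℤ) (h1 : lambdaForm e e = -1) (h2 : lambdaForm e kvec = -1) :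
    (0 ≤ e 0 ∧ e 0 ≤ 3) ∧ ∀ i : Fin 7, -((e 0 + 1)/2) ≤ e i.succ ∧ e i.succ ≤ -((e 0 + 1)/2) + 1 := by
  simp [lambdaForm, kvec, Fin.sum_univ_eight] at h1 h2
  set a := e 0 with ha
  have sqs := fun j : Fin 8 => sq_nonneg (7*e j - (1-3*a))
  have iden : (7*e 1 - (1-3*a))^2 + (7*e 2 - (1-3*a))^2 + (7*e 3 - (1-3*a))^2
      + (7*e 4 - (1-3*a))^2 + (7*e 5 - (1-3*a))^2 + (7*e 6 - (1-3*a))^2 + (7*e 7 - (1-3*a))^2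
      = 14*(3 + 3*a - a*a) := by
    linear_combination (-49)*h1 + (14*(1-3*a))*h2
  have key : 0 ≤ 14*(3 + 3*a - a*a) := by
    linarith [iden, sqs 1, sqs 2, sqs 3, sqs 4, sqs 5, sqs 6, sqs 7]
  obtain ⟨hA0, hA3⟩ := aBound a key
  clear h1 h2
  have c1 := coordBound a (e 1) hA0 hA3 (by linarith [iden, sqs 2, sqs 3, sqs 4, sqs 5, sqs 6, sqs 7])
  have c2 := coordBound a (e 2) hA0 hA3 (by linarith [iden, sqs 1, sqs 3, sqs 4, sqs 5, sqs 6, sqs 7])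
  have c3 := coordBound a (e 3) hA0 hA3 (by linarith [iden, sqs 1, sqs 2, sqs 4, sqs 5, sqs 6, sqs 7])
  have c4 := coordBound a (e 4) hA0 hA3 (by linarith [iden, sqs 1, sqs 2, sqs 3, sqs 5, sqs 6, sqs 7])
  have c5 := coordBound a (e 5) hA0 hA3 (by linarith [iden, sqs 1, sqs 2, sqs 3, sqs 4, sqs 6, sqs 7])
  have c6 := coordBound a (e 6) hA0 hA3 (by linarith [iden, sqs 1, sqs 2, sqs 3, sqs 4, sqs 5, sqs 7])
  have c7 := coordBound a (e 7) hA0 hA3 (by linarith [iden, sqs 1, sqs 2, sqs 3, sqs 4, sqs 5, sqs 6])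
  refine ⟨⟨hA0, hA3⟩, fun i => ?_⟩
  fin_cases i
  exacts [c1, c2, c3, c4, c5, c6, c7]

lemma set_eq :
    {e : Fin 8 → ℤ | lambdaForm e e = -1 ∧ lambdaForm e kvec = -1} = fmap '' ↑Ttot := by
  ext e
  simp only [Set.mem_setOf_eq, Set.mem_image, Finset.mem_coe, Ttot, Finset.mem_disjUnion]
  constructor
  · rintro ⟨h1, h2⟩
    obtain ⟨⟨hA0, hA3⟩, hB⟩ := bounds e h1 h2
    refine ⟨(e 0, e 1, e 2, e 3, e 4, e 5, e 6, e 7), ?_, ?_⟩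
    · have hmem : ∀ a : ℤ, e 0 = a →
          (e 0, e 1, e 2, e 3, e 4, e 5, e 6, e 7) ∈ Ta a := by
        intro a haa
        subst haa
        rw [Ta, Finset.mem_filter]
        constructor
        · simp only [Finset.mem_product, Finset.mem_singleton]
          exact ⟨trivial, Finset.mem_Icc.2 (hB 0), Finset.mem_Icc.2 (hB 1), Finset.mem_Icc.2 (hB 2),
            Finset.mem_Icc.2 (hB 3), Finset.mem_Icc.2 (hB 4), Finset.mem_Icc.2 (hB 5),
            Finset.mem_Icc.2 (hB 6)⟩
        · have h1' := h1
          have h2' := h2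
          simp [lambdaForm, kvec, Fin.sum_univ_eight] at h1' h2'
          exact ⟨by linarith, by linarith⟩
      have : e 0 = 0 ∨ e 0 = 1 ∨ e 0 = 2 ∨ e 0 = 3 := by omega
      rcases this with h | h | h | h
      · exact Or.inl (Or.inl (Or.inl (hmem 0 h)))
      · exact Or.inl (Or.inl (Or.inr (hmem 1 h)))
      · exact Or.inl (Or.inr (hmem 2 h))
      · exact Or.inr (hmem 3 h)
    · funext i; fin_cases i <;> rfl
  · rintro ⟨⟨a, b, c, d, e', f, g, h⟩, hp, rfl⟩
    have hP : Pcond (a, b, c, d, e', f, g, h) := by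
      rcases hp with ((h | h) | h) | h <;>
        exact (Finset.mem_filter.1 h).2
    obtain ⟨hq1, hq2⟩ := hP
    simp only at hq1 hq2
    constructor <;>
    · simp [lambdaForm, kvec, fmap, Fin.sum_univ_eight,
        show (![a, b, c, d, e', f, g, h] : Fin 8 → ℤ) 5 = f from rfl,
        show (![a, b, c, d, e', f, g, h] : Fin 8 → ℤ) 6 = g from rfl,
        show (![a, b, c, d, e', f, g, h] : Fin 8 → ℤ) 7 = h from rfl]
      linarith

/-- there are exactly 56 exceptional elements in Λ_{1,7},
i.e. elements e with e·e = -1 and e·k = -1. -/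
theorem card_exceptional :
    {e : Fin 8 → ℤ | lambdaForm e e = -1 ∧ lambdaForm e kvec = -1}.ncard = 56 := by
  rw [set_eq, Set.ncard_image_of_injective _ fmap_inj, Set.ncard_coe_finset]
  simp only [Ttot, Finset.card_disjUnion]
  have e0 : (Ta 0).card = 7 := by decide
  have e1 : (Ta 1).card = 21 := by decide
  have e2 : (Ta 2).card = 21 := by decide
  have e3 : (Ta 3).card = 7 := by decide
  omega
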